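/- Let S be the symmetric simple random walk on ℤ started at S_0 = 0 (i.i.d. increments equal to ±1 with probability 1/2 each), and let τ = {τ_0 = 0 < τ_1 < τ_2 < ⋯} be its successive return times to 0. Then for every q > 0, lim_{N→∞, N even} E[ Π_{j≥1: τ_j ≤ N} (1 + e^{−(q/N)(τ_j − τ_{j−1})})/2 | S_N = 0 ] = (1 − e^{−q})/q. -/

import Mathlib

open MeasureTheory ProbabilityTheory Filter Finset

/-- The last return to `0` of the walk `S` strictly before time `n` (the previous zero);
since `S 0 = 0` the set of zeros in `[0, n)` is nonempty and `Finset.sup` is its maximum. -/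
noncomputable def prevZero (S : ℕ → ℤ) (n : ℕ) : ℕ :=
  ((Finset.range n).filter fun m => S m = 0).sup id

/-- The product `∏_{j ≥ 1 : τ_j ≤ N} (1+e^{-(q/N)(τ_j - τ_{j-1})})/2` over the successive
return times to `0` of the walk `S` up to time `N`: each `n ∈ [1,N]` with `S n = 0` is a
return time `τ_j`, and `n - prevZero S n` is the gap `τ_j - τ_{j-1}`. -/
noncomputable def excursionProd (S : ℕ → ℤ) (q : ℝ) (N : ℕ) : ℝ :=
  ∏ n ∈ (Finset.Icc 1 N).filter (fun n => S n = 0),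
    (1 + Real.exp (-(q / (N : ℝ)) * ((n : ℝ) - (prevZero S n : ℝ)))) / 2

namespace SRW

open scoped Classical


lemma catalan_conv (m : ℕ) :
    ∑ j ∈ range (m + 1), catalan j * catalan (m - j) = catalan (m + 1) := by
  rw [catalan_succ m, Fin.sum_univ_eq_sum_range (fun j => catalan j * catalan (m - j)) (m+1)]

lemma sum_Icc_one (M : Type*) [AddCommMonoid M] (g : ℕ → M) (m : ℕ) :
    ∑ k ∈ Icc 1 m, g k = ∑ j ∈ range m, g (1 + j) := by
  rw [← Finset.Ico_add_one_right_eq_Icc, Finset.sum_Ico_eq_sum_range]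
  simp

lemma two_cat_conv (m : ℕ) (hm : 1 ≤ m) :
    ∑ k ∈ Icc 1 m, 2 * catalan (k - 1) * Nat.centralBinom (m - k) = Nat.centralBinom m := by
  set a : ℕ → ℕ := fun j => catalan j * ((m - j) * catalan (m - 1 - j)) with ha
  set b : ℕ → ℕ := fun j => catalan (m - 1 - j) * ((j + 1) * catalan j) with hb
  have h1 : ∑ k ∈ Icc 1 m, 2 * catalan (k - 1) * Nat.centralBinom (m - k)
      = ∑ j ∈ range m, (a j + a j) := by
    rw [sum_Icc_one]
    apply Finset.sum_congr rfl
    intro j hj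
    simp only [mem_range] at hj
    rw [show m - (1 + j) = m - 1 - j by omega,
      ← succ_mul_catalan_eq_centralBinom (m - 1 - j), show m - 1 - j + 1 = m - j by omega,
      show 1 + j - 1 = j by omega, ha]
    ring
  have h2 : ∑ j ∈ range m, a j = ∑ j ∈ range m, b j := by
    rw [← Finset.sum_range_reflect a m]
    apply Finset.sum_congr rfl
    intro j hj
    simp only [mem_range] at hj
    simp only [ha, hb]
    rw [show m - 1 - (m - 1 - j) = j by omega, show m - (m - 1 - j) = j + 1 by omega]
  have h3 : ∑ j ∈ range m, (a j + b j)
      = (m + 1) * ∑ j ∈ range m, catalan j * catalan (m - 1 - j) := by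
    rw [Finset.mul_sum]
    apply Finset.sum_congr rfl
    intro j hj
    simp only [mem_range] at hj
    have e : a j + b j = ((m - j) + (j + 1)) * (catalan j * catalan (m - 1 - j)) := by
      simp only [ha, hb]; ring
    rw [e, show (m - j) + (j + 1) = m + 1 by omega]
  have h4 : ∑ j ∈ range m, catalan j * catalan (m - 1 - j) = catalan m := by
    have := catalan_conv (m - 1)
    rw [show m - 1 + 1 = m by omega] at this
    rw [← this]
  rw [h1, Finset.sum_add_distrib]
  nth_rewrite 2 [h2]
  rw [← Finset.sum_add_distrib, h3, h4, succ_mul_catalan_eq_centralBinom]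

lemma key_real (r : ℝ) (m : ℕ) (hm : 1 ≤ m) :
    ∑ k ∈ Icc 1 m, (catalan (k - 1) : ℝ) * (catalan (m - k) : ℝ) * (1 + r ^ k)
        * (∑ j ∈ range (m - k + 1), r ^ j)
      = (catalan m : ℝ) * ∑ j ∈ range (m + 1), r ^ j := by
  set σ : ℕ → ℝ := fun n => ∑ j ∈ range (n + 1), r ^ j with hσ
  have hsplit : ∀ j < m, σ m = σ j + r ^ (j + 1) * σ (m - 1 - j) := by
    intro j hj
    simp only [hσ]
    rw [show m + 1 = (j + 1) + (m - 1 - j + 1) by omega, Finset.sum_range_add]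
    congr 1
    rw [Finset.mul_sum]
    apply Finset.sum_congr rfl
    intro i _
    rw [← pow_add]
  have h1 : ∑ k ∈ Icc 1 m, (catalan (k - 1) : ℝ) * (catalan (m - k) : ℝ) * (1 + r ^ k)
        * (∑ j ∈ range (m - k + 1), r ^ j)
      = ∑ j ∈ range m, ((catalan j : ℝ) * (catalan (m - 1 - j) : ℝ) * σ (m - 1 - j)
          + (catalan j : ℝ) * (catalan (m - 1 - j) : ℝ) * (r ^ (j + 1) * σ (m - 1 - j))) := by
    rw [sum_Icc_one]
    apply Finset.sum_congr rfl
    intro j hj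
    simp only [mem_range] at hj
    rw [show 1 + j - 1 = j by omega, show m - (1 + j) = m - 1 - j by omega,
      show 1 + j = j + 1 by omega]
    have e : (∑ i ∈ range (m - 1 - j + 1), r ^ i) = σ (m - 1 - j) := rfl
    rw [e]
    ring
  have h2 : ∑ j ∈ range m, (catalan j : ℝ) * (catalan (m - 1 - j) : ℝ) * σ (m - 1 - j)
      = ∑ j ∈ range m, (catalan j : ℝ) * (catalan (m - 1 - j) : ℝ) * σ j := by
    rw [← Finset.sum_range_reflect
      (fun j => (catalan j : ℝ) * (catalan (m - 1 - j) : ℝ) * σ j) m]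
    apply Finset.sum_congr rfl
    intro j hj
    simp only [mem_range] at hj
    rw [show m - 1 - (m - 1 - j) = j by omega]
    ring
  have h3 : ∀ j < m, (catalan j : ℝ) * (catalan (m - 1 - j) : ℝ) * σ j
        + (catalan j : ℝ) * (catalan (m - 1 - j) : ℝ) * (r ^ (j + 1) * σ (m - 1 - j))
      = (catalan j : ℝ) * (catalan (m - 1 - j) : ℝ) * σ m := by
    intro j hj
    rw [hsplit j hj]
    ring
  have h4 : ∑ j ∈ range m, (catalan j : ℝ) * (catalan (m - 1 - j) : ℝ) = (catalan m : ℝ) := by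
    have := catalan_conv (m - 1)
    rw [show m - 1 + 1 = m by omega] at this
    rw [← this]
    push_cast
    rfl
  calc ∑ k ∈ Icc 1 m, (catalan (k - 1) : ℝ) * (catalan (m - k) : ℝ) * (1 + r ^ k)
        * (∑ j ∈ range (m - k + 1), r ^ j)
      = ∑ j ∈ range m, ((catalan j : ℝ) * (catalan (m - 1 - j) : ℝ) * σ j
          + (catalan j : ℝ) * (catalan (m - 1 - j) : ℝ) * (r ^ (j + 1) * σ (m - 1 - j))) := by
        rw [h1, Finset.sum_add_distrib, h2, ← Finset.sum_add_distrib]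
    _ = ∑ j ∈ range m, (catalan j : ℝ) * (catalan (m - 1 - j) : ℝ) * σ m := by
        apply Finset.sum_congr rfl
        intro j hj
        simp only [mem_range] at hj
        exact h3 j hj
    _ = (catalan m : ℝ) * σ m := by rw [← Finset.sum_mul, h4]



/-- step sequences of length `N`: values `±1` below `N`, `0` from `N` on. -/
noncomputable def stepSet (N : ℕ) : Finset (ℕ → ℤ) :=
  (Fintype.piFinset fun _ : Fin N => ({1, -1} : Finset ℤ)).image
    (fun ε i => if h : i < N then ε ⟨i, h⟩ else 0)

/-- partial sums -/
def ps (ε : ℕ → ℤ) (n : ℕ) : ℤ := ∑ i ∈ Finset.range n, ε i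

noncomputable def wt (s : ℝ) (N : ℕ) (ε : ℕ → ℤ) : ℝ :=
  ∏ n ∈ (Finset.Icc 1 N).filter (fun n => ps ε n = 0),
    (1 + s ^ (n - prevZero (ps ε) n)) / 2

noncomputable def Zset (N : ℕ) : Finset (ℕ → ℤ) :=
  (stepSet N).filter (fun ε => ps ε N = 0)

noncomputable def T (s : ℝ) (N : ℕ) : ℝ := ∑ ε ∈ Zset N, wt s N ε

noncomputable def Fset (t : ℕ) : Finset (ℕ → ℤ) :=
  (Zset t).filter (fun ε => ∀ k, 0 < k → k < t → ps ε k ≠ 0)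

noncomputable def fret (t : ℕ) : ℕ := (Fset t).card

def drop (t : ℕ) (ε : ℕ → ℤ) : ℕ → ℤ := fun i => ε (t + i)
def take (t : ℕ) (ε : ℕ → ℤ) : ℕ → ℤ := fun i => if i < t then ε i else 0
def concat (t : ℕ) (α β : ℕ → ℤ) : ℕ → ℤ := fun i => if i < t then α i else β (i - t)

/-- first return time -/
noncomputable def fr (ε : ℕ → ℤ) : ℕ := sInf {k | 0 < k ∧ ps ε k = 0}

lemma mem_stepSet {N : ℕ} {ε : ℕ → ℤ} :
    ε ∈ stepSet N ↔ (∀ i, i < N → ε i = 1 ∨ ε i = -1) ∧ ∀ i, N ≤ i → ε i = 0 := by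
  constructor
  · intro h
    simp only [stepSet, mem_image, Fintype.mem_piFinset] at h
    obtain ⟨a, ha, rfl⟩ := h
    constructor
    · intro i hi
      have := ha ⟨i, hi⟩
      simp only [Finset.mem_insert, Finset.mem_singleton] at this
      simpa [hi] using this
    · intro i hi
      simp [Nat.not_lt.2 hi]
  · rintro ⟨h1, h2⟩
    simp only [stepSet, mem_image, Fintype.mem_piFinset]
    refine ⟨fun j => ε j, ?_, ?_⟩
    · intro j
      simp only [Finset.mem_insert, Finset.mem_singleton]
      exact h1 j j.2
    · funext i
      by_cases h : i < N
      · simp [h]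
      · simp only [h, dif_neg, not_false_iff]
        exact (h2 i (Nat.le_of_not_lt h)).symm

lemma ps_zero (ε : ℕ → ℤ) : ps ε 0 = 0 := by simp [ps]

lemma ps_drop (t : ℕ) (ε : ℕ → ℤ) (k : ℕ) : ps (drop t ε) k = ps ε (t + k) - ps ε t := by
  simp only [ps, drop, Finset.sum_range_add]
  ring

lemma ps_take {t k : ℕ} (ε : ℕ → ℤ) (hk : k ≤ t) : ps (take t ε) k = ps ε k := by
  apply Finset.sum_congr rfl
  intro i hi
  simp only [mem_range] at hi
  simp [take, show i < t by omega]

lemma ps_concat_le {t k : ℕ} (α β : ℕ → ℤ) (hk : k ≤ t) : ps (concat t α β) k = ps α k := by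
  apply Finset.sum_congr rfl
  intro i hi
  simp only [mem_range] at hi
  simp [concat, show i < t by omega]

lemma ps_concat_ge {t k : ℕ} (α β : ℕ → ℤ) (hk : t ≤ k) :
    ps (concat t α β) k = ps α t + ps β (k - t) := by
  rw [show k = t + (k - t) by omega]
  simp only [ps, Finset.sum_range_add]
  congr 1
  · apply Finset.sum_congr rfl
    intro i hi
    simp only [mem_range] at hi
    simp [concat, hi]
  · rw [show t + (k - t) - t = k - t by omega]
    apply Finset.sum_congr rfl
    intro i _
    simp [concat, show ¬ (t + i < t) by omega, show t + i - t = i by omega]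

lemma even_of_ps_eq_zero {N n : ℕ} {ε : ℕ → ℤ} (hε : ε ∈ stepSet N) (hn : n ≤ N)
    (h : ps ε n = 0) : Even n := by
  rw [mem_stepSet] at hε
  have key : ∀ j, j ≤ N → (2 : ℤ) ∣ ps ε j - j := by
    intro j
    induction j with
    | zero => simp [ps]
    | succ j ih =>
      intro hj
      have h1 := ih (by omega)
      have h2 : ps ε (j + 1) = ps ε j + ε j := by
        simp [ps, Finset.sum_range_succ]
      rcases hε.1 j (by omega) with h3 | h3 <;>
      · rw [h2, h3]
        push_cast
        omega
  have h5 := key n hn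
  rw [h] at h5
  exact Nat.even_iff.2 (by omega)

lemma prevZero_le (σ : ℕ → ℤ) (n : ℕ) : prevZero σ n ≤ n := by
  apply Finset.sup_le
  intro m hm
  simp only [Finset.mem_filter, Finset.mem_range] at hm
  exact le_of_lt hm.1

lemma prevZero_eq_zero {σ : ℕ → ℤ} {t : ℕ} (hmin : ∀ m, 0 < m → m < t → σ m ≠ 0) :
    prevZero σ t = 0 := by
  apply Nat.le_zero.mp
  apply Finset.sup_le
  intro m hm
  simp only [id_eq]
  simp only [Finset.mem_filter, Finset.mem_range] at hm
  by_contra hm0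
  exact hmin m (by omega) hm.1 hm.2

lemma prevZero_shift {σ : ℕ → ℤ} {t k : ℕ} (ht : σ t = 0) (hk : 1 ≤ k) :
    prevZero σ (t + k) = t + prevZero (fun i => σ (t + i)) k := by
  set τ : ℕ → ℤ := fun i => σ (t + i) with hτ
  apply le_antisymm
  · apply Finset.sup_le
    intro m hm
    simp only [id_eq]
    simp only [Finset.mem_filter, Finset.mem_range] at hm
    rcases Nat.lt_or_ge m t with h | h
    · exact le_trans (le_of_lt h) (Nat.le_add_right t _)
    · have : m - t ∈ (Finset.range k).filter (fun i => τ i = 0) := by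
        simp only [Finset.mem_filter, Finset.mem_range, hτ]
        exact ⟨by omega, by rw [show t + (m - t) = m by omega]; exact hm.2⟩
      have h2 : id (m - t) ≤ prevZero τ k := Finset.le_sup this
      simp only [id_eq] at h2
      omega
  · have hne : ((Finset.range k).filter (fun i => τ i = 0)).Nonempty := by
      refine ⟨0, ?_⟩
      simp only [Finset.mem_filter, Finset.mem_range, hτ]
      exact ⟨by omega, by simpa using ht⟩
    obtain ⟨b, hb, hsup⟩ := Finset.exists_mem_eq_sup _ hne id
    simp only [Finset.mem_filter, Finset.mem_range, hτ] at hb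
    have : t + b ∈ (Finset.range (t + k)).filter (fun m => σ m = 0) := by
      simp only [Finset.mem_filter, Finset.mem_range]
      exact ⟨by omega, hb.2⟩
    have h2 : id (t + b) ≤ prevZero σ (t + k) := Finset.le_sup this
    simp only [id_eq] at h2
    rw [show prevZero τ k = b from hsup]
    omega

lemma wt_split (s : ℝ) {n t : ℕ} (ε : ℕ → ℤ) (ht1 : 1 ≤ t) (htn : t ≤ n)
    (hzt : ps ε t = 0) (hmin : ∀ k, 0 < k → k < t → ps ε k ≠ 0) :
    wt s n ε = (1 + s ^ t) / 2 * wt s (n - t) (drop t ε) := by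
  have hτ : ∀ k, ps (drop t ε) k = ps ε (t + k) := by
    intro k
    rw [ps_drop, hzt, sub_zero]
  have hfun : (fun i => ps ε (t + i)) = ps (drop t ε) := by
    funext i; rw [hτ]
  have hA : (Finset.Icc 1 n).filter (fun m => ps ε m = 0)
      = insert t (((Finset.Icc 1 (n - t)).filter
          (fun k => ps (drop t ε) k = 0)).image (fun k => t + k)) := by
    ext m
    simp only [Finset.mem_filter, Finset.mem_Icc, Finset.mem_insert, Finset.mem_image]
    constructor
    · rintro ⟨⟨h1, h2⟩, h3⟩
      rcases lt_trichotomy m t with h | h | h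
      · exact absurd h3 (hmin m h1 h)
      · exact Or.inl h
      · refine Or.inr ⟨m - t, ⟨⟨by omega, by omega⟩, ?_⟩, by omega⟩
        rw [hτ, show t + (m - t) = m by omega]
        exact h3
    · rintro (rfl | ⟨k, ⟨⟨hk1, hk2⟩, hk3⟩, rfl⟩)
      · exact ⟨⟨ht1, htn⟩, hzt⟩
      · refine ⟨⟨by omega, by omega⟩, ?_⟩
        rw [hτ] at hk3
        exact hk3
  have hnotmem : t ∉ ((Finset.Icc 1 (n - t)).filter
      (fun k => ps (drop t ε) k = 0)).image (fun k => t + k) := by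
    simp only [Finset.mem_image, Finset.mem_filter, Finset.mem_Icc]
    rintro ⟨k, ⟨⟨hk1, _⟩, _⟩, hk⟩
    omega
  rw [wt, hA, Finset.prod_insert hnotmem,
    Finset.prod_image (fun a _ b _ h => by omega)]
  have hfirst : (1 + s ^ (t - prevZero (ps ε) t)) / 2 = (1 + s ^ t) / 2 := by
    rw [prevZero_eq_zero hmin, Nat.sub_zero]
  rw [hfirst]
  congr 1
  rw [wt]
  apply Finset.prod_congr rfl
  intro k hk
  simp only [Finset.mem_filter, Finset.mem_Icc] at hk
  rw [prevZero_shift hzt hk.1.1, hfun, show t + k - (t + prevZero (ps (drop t ε)) k)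
    = k - prevZero (ps (drop t ε)) k by omega]

lemma fr_spec {n : ℕ} {ε : ℕ → ℤ} (hn : 1 ≤ n) (h : ps ε n = 0) :
    (1 ≤ fr ε ∧ fr ε ≤ n ∧ ps ε (fr ε) = 0) ∧ ∀ k, 0 < k → k < fr ε → ps ε k ≠ 0 := by
  have hne : n ∈ {k | 0 < k ∧ ps ε k = 0} := ⟨by omega, h⟩
  have hmem := Nat.sInf_mem (Set.nonempty_of_mem hne)
  refine ⟨⟨hmem.1, Nat.sInf_le hne, hmem.2⟩, ?_⟩
  intro k hk1 hk2 hk3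
  exact Nat.notMem_of_lt_sInf hk2 ⟨hk1, hk3⟩


lemma take_mem {n t : ℕ} {ε : ℕ → ℤ} (hε : ε ∈ stepSet n) (htn : t ≤ n) :
    take t ε ∈ stepSet t := by
  rw [mem_stepSet] at hε ⊢
  constructor
  · intro i hi
    simp only [take, if_pos hi]
    exact hε.1 i (by omega)
  · intro i hi
    simp [take, show ¬ i < t by omega]

lemma drop_mem {n t : ℕ} {ε : ℕ → ℤ} (hε : ε ∈ stepSet n) :
    drop t ε ∈ stepSet (n - t) := by
  rw [mem_stepSet] at hε ⊢
  constructor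
  · intro i hi
    exact hε.1 (t + i) (by omega)
  · intro i hi
    exact hε.2 (t + i) (by omega)

lemma concat_mem {n t : ℕ} {α β : ℕ → ℤ} (hα : α ∈ stepSet t) (hβ : β ∈ stepSet (n - t))
    (htn : t ≤ n) : concat t α β ∈ stepSet n := by
  rw [mem_stepSet] at hα hβ ⊢
  constructor
  · intro i hi
    by_cases h : i < t
    · simpa [concat, h] using hα.1 i h
    · simpa [concat, h] using hβ.1 (i - t) (by omega)
  · intro i hi
    simp only [concat, show ¬ i < t by omega, if_neg, not_false_iff]
    exact hβ.2 (i - t) (by omega)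

lemma concat_take_drop (t : ℕ) (ε : ℕ → ℤ) : concat t (take t ε) (drop t ε) = ε := by
  funext i
  by_cases h : i < t
  · simp [concat, take, h]
  · simp only [concat, take, h, if_neg, not_false_iff, drop]
    rw [show t + (i - t) = i by omega]

lemma take_concat {t : ℕ} {α : ℕ → ℤ} (hα : α ∈ stepSet t) (β : ℕ → ℤ) :
    take t (concat t α β) = α := by
  rw [mem_stepSet] at hα
  funext i
  by_cases h : i < t
  · simp [take, concat, h]
  · simp only [take, concat, h, if_neg, not_false_iff]
    exact (hα.2 i (by omega)).symm

lemma drop_concat (t : ℕ) (α β : ℕ → ℤ) : drop t (concat t α β) = β := by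
  funext i
  simp [drop, concat, show ¬ t + i < t by omega, show t + i - t = i by omega]

lemma mem_Fset {t : ℕ} {α : ℕ → ℤ} :
    α ∈ Fset t ↔ α ∈ stepSet t ∧ ps α t = 0 ∧ ∀ k, 0 < k → k < t → ps α k ≠ 0 := by
  simp only [Fset, Zset, Finset.mem_filter]
  tauto

lemma mem_Zset {n : ℕ} {ε : ℕ → ℤ} : ε ∈ Zset n ↔ ε ∈ stepSet n ∧ ps ε n = 0 := by
  simp only [Zset, Finset.mem_filter]

lemma fr_concat {t : ℕ} {α β : ℕ → ℤ} (ht1 : 1 ≤ t) (hα0 : ps α t = 0)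
    (hαm : ∀ k, 0 < k → k < t → ps α k ≠ 0) : fr (concat t α β) = t := by
  have h0 : ps (concat t α β) t = 0 := by rw [ps_concat_le α β le_rfl]; exact hα0
  have hle : fr (concat t α β) ≤ t := Nat.sInf_le ⟨by omega, h0⟩
  have htmem : t ∈ {k | 0 < k ∧ ps (concat t α β) k = 0} := by
    simp only [Set.mem_setOf_eq]
    exact ⟨by omega, h0⟩
  have hmem := Nat.sInf_mem (Set.nonempty_of_mem htmem)
  rcases Nat.lt_or_ge (fr (concat t α β)) t with h | h
  · exfalso
    have hlt : sInf {k | 0 < k ∧ ps (concat t α β) k = 0} < t := h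
    have h2 := hmem.2
    rw [ps_concat_le α β (le_of_lt hlt)] at h2
    exact hαm _ hmem.1 hlt h2
  · omega

lemma T_rec (s : ℝ) {n : ℕ} (hn : 1 ≤ n) :
    T s n = ∑ t ∈ Icc 1 n, (fret t : ℝ) * ((1 + s ^ t) / 2) * T s (n - t) := by
  rw [T, ← Finset.sum_fiberwise_of_maps_to (g := fr) (t := Icc 1 n) ?_ (wt s n)]
  swap
  · intro ε hε
    rw [mem_Zset] at hε
    have := fr_spec hn hε.2
    simp only [Finset.mem_Icc]
    exact ⟨this.1.1, this.1.2.1⟩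
  apply Finset.sum_congr rfl
  intro t ht
  simp only [Finset.mem_Icc] at ht
  have step1 : ∀ ε ∈ (Zset n).filter (fun ε => fr ε = t),
      wt s n ε = (1 + s ^ t) / 2 * wt s (n - t) (drop t ε) := by
    intro ε hε
    simp only [Finset.mem_filter, mem_Zset] at hε
    obtain ⟨⟨hε1, hε2⟩, hε3⟩ := hε
    have hspec := fr_spec hn hε2
    rw [hε3] at hspec
    exact wt_split s ε ht.1 ht.2 hspec.1.2.2 hspec.2
  rw [Finset.sum_congr rfl step1]
  have step2 : ∑ ε ∈ (Zset n).filter (fun ε => fr ε = t),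
        (1 + s ^ t) / 2 * wt s (n - t) (drop t ε)
      = ∑ p ∈ Fset t ×ˢ Zset (n - t), (1 + s ^ t) / 2 * wt s (n - t) p.2 := by
    apply Finset.sum_nbij' (i := fun ε => (take t ε, drop t ε))
      (j := fun p => concat t p.1 p.2)
    · intro ε hε
      simp only [Finset.mem_filter, mem_Zset] at hε
      obtain ⟨⟨hε1, hε2⟩, hε3⟩ := hε
      have hspec := fr_spec hn hε2
      rw [hε3] at hspec
      simp only [Finset.mem_product, mem_Fset, mem_Zset]
      refine ⟨⟨take_mem hε1 ht.2, ?_, ?_⟩, drop_mem hε1, ?_⟩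
      · rw [ps_take ε le_rfl]; exact hspec.1.2.2
      · intro k hk1 hk2
        rw [ps_take ε (le_of_lt hk2)]
        exact hspec.2 k hk1 hk2
      · rw [ps_drop, hspec.1.2.2, sub_zero, show t + (n - t) = n by omega]
        exact hε2
    · intro p hp
      simp only [Finset.mem_product, mem_Fset, mem_Zset] at hp
      obtain ⟨⟨hp1, hp2, hp3⟩, hp4, hp5⟩ := hp
      simp only [Finset.mem_filter, mem_Zset]
      refine ⟨⟨concat_mem hp1 hp4 ht.2, ?_⟩, fr_concat ht.1 hp2 hp3⟩
      rw [ps_concat_ge _ _ ht.2, hp2, hp5, add_zero]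
    · intro ε _
      exact concat_take_drop t ε
    · intro p hp
      simp only [Finset.mem_product, mem_Fset, mem_Zset] at hp
      exact Prod.ext (take_concat hp.1.1 p.2) (drop_concat t p.1 p.2)
    · intro ε _
      rfl
  rw [step2, Finset.sum_product]
  simp only [Finset.sum_const, nsmul_eq_mul]
  rw [← Finset.mul_sum,
    show (∑ x ∈ Zset (n - t), wt s (n - t) x) = T s (n - t) from rfl,
    show ((#(Fset t) : ℕ) : ℝ) = ((fret t : ℕ) : ℝ) from rfl]
  ring

lemma Zset_odd {n : ℕ} (hn : ¬ Even n) : Zset n = ∅ := by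
  rw [Finset.eq_empty_iff_forall_notMem]
  intro ε hε
  rw [mem_Zset] at hε
  exact hn (even_of_ps_eq_zero hε.1 le_rfl hε.2)

lemma T_odd (s : ℝ) {n : ℕ} (hn : ¬ Even n) : T s n = 0 := by
  rw [T, Zset_odd hn, Finset.sum_empty]

lemma fret_odd {t : ℕ} (ht : ¬ Even t) : fret t = 0 := by
  have : Fset t = ∅ := by
    rw [Finset.eq_empty_iff_forall_notMem]
    intro ε hε
    rw [mem_Fset] at hε
    exact ht (even_of_ps_eq_zero hε.1 le_rfl hε.2.1)
  rw [fret, this, Finset.card_empty]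

lemma wt_one (N : ℕ) (ε : ℕ → ℤ) : wt 1 N ε = 1 := by
  rw [wt]
  apply Finset.prod_eq_one
  intro n _
  rw [one_pow]
  norm_num


lemma T_one (N : ℕ) : T 1 N = ((Zset N).card : ℝ) := by
  rw [T, Finset.sum_congr rfl (fun ε _ => wt_one N ε)]
  simp


lemma card_Zset (m : ℕ) : (Zset (2 * m)).card = Nat.centralBinom m := by
  classical
  have hps : ∀ ε ∈ stepSet (2*m), ps ε (2*m)
      = (#((range (2*m)).filter (fun i => ε i = 1)) : ℤ)
        - (#((range (2*m)).filter (fun i => ¬ ε i = 1)) : ℤ) := by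
    intro ε hε
    rw [mem_stepSet] at hε
    rw [ps, ← Finset.sum_filter_add_sum_filter_not (range (2*m)) (fun i => ε i = 1)]
    have h1 : ∑ i ∈ (range (2*m)).filter (fun i => ε i = 1), ε i
        = (#((range (2*m)).filter (fun i => ε i = 1)) : ℤ) := by
      rw [Finset.sum_congr rfl (fun i hi => (Finset.mem_filter.1 hi).2)]
      simp
    have h2 : ∑ i ∈ (range (2*m)).filter (fun i => ¬ ε i = 1), ε i
        = -(#((range (2*m)).filter (fun i => ¬ ε i = 1)) : ℤ) := by
      have : ∀ i ∈ (range (2*m)).filter (fun i => ¬ ε i = 1), ε i = -1 := by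
        intro i hi
        simp only [Finset.mem_filter, Finset.mem_range] at hi
        rcases hε.1 i hi.1 with h | h
        · exact absurd h hi.2
        · exact h
      rw [Finset.sum_congr rfl this]
      simp
    rw [h1, h2]
    ring
  have hcards : ∀ ε : ℕ → ℤ, #((range (2*m)).filter (fun i => ε i = 1))
      + #((range (2*m)).filter (fun i => ¬ ε i = 1)) = 2*m := by
    intro ε
    rw [Finset.card_filter_add_card_filter_not, Finset.card_range]
  have hfil : ∀ A ∈ Finset.powersetCard m (range (2*m)),
      (range (2*m)).filter
        (fun i => (if i < 2*m then (if i ∈ A then (1:ℤ) else -1) else 0) = 1) = A := by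
    intro A hA
    rw [Finset.mem_powersetCard] at hA
    ext i
    simp only [Finset.mem_filter, Finset.mem_range]
    constructor
    · rintro ⟨h1, h2⟩
      rw [if_pos h1] at h2
      by_cases h : i ∈ A
      · exact h
      · rw [if_neg h] at h2; norm_num at h2
    · intro h
      have hi : i < 2*m := by
        have := hA.1 h
        simpa using this
      exact ⟨hi, by rw [if_pos hi, if_pos h]⟩
  have hbij : #(Zset (2*m)) = #(Finset.powersetCard m (range (2*m))) := by
    apply Finset.card_nbij' (i := fun ε => (range (2*m)).filter (fun i => ε i = 1))
      (j := fun A => fun i => if i < 2*m then (if i ∈ A then (1:ℤ) else -1) else 0)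
    · intro ε hε
      rw [Finset.mem_coe, mem_Zset] at hε
      have h1 := hps ε hε.1
      rw [hε.2] at h1
      have h2 := hcards ε
      rw [Finset.mem_coe, Finset.mem_powersetCard]
      exact ⟨Finset.filter_subset _ _, by dsimp only; omega⟩
    · intro A hA
      have hA' := Finset.mem_powersetCard.1 hA
      have hstep : (fun i => if i < 2*m then (if i ∈ A then (1:ℤ) else -1) else 0)
          ∈ stepSet (2*m) := by
        rw [mem_stepSet]
        constructor
        · intro i hi
          rw [if_pos hi]
          by_cases h : i ∈ A
          · exact Or.inl (if_pos h)
          · exact Or.inr (if_neg h)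
        · intro i hi
          rw [if_neg (by omega)]
      rw [Finset.mem_coe, mem_Zset]
      refine ⟨hstep, ?_⟩
      rw [hps _ hstep, hfil A hA]
      have h2 := hcards (fun i => if i < 2*m then (if i ∈ A then (1:ℤ) else -1) else 0)
      rw [hfil A hA] at h2
      rw [hA'.2]
      have h3 : #((range (2*m)).filter
          (fun i => ¬ (if i < 2*m then (if i ∈ A then (1:ℤ) else -1) else 0) = 1)) = m := by
        rw [hA'.2] at h2
        omega
      rw [h3]
      ring
    · intro ε hε
      rw [Finset.mem_coe, mem_Zset, mem_stepSet] at hε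
      funext x
      dsimp only
      by_cases hx : x < 2*m
      · rw [if_pos hx]
        rcases hε.1.1 x hx with h | h
        · rw [if_pos, h]
          simp only [Finset.mem_filter, Finset.mem_range]
          exact ⟨hx, h⟩
        · rw [if_neg, h]
          simp only [Finset.mem_filter, Finset.mem_range]
          rintro ⟨_, h2⟩
          rw [h] at h2
          norm_num at h2
      · rw [if_neg hx]
        exact (hε.1.2 x (by omega)).symm
    · intro A hA
      exact hfil A hA
  rw [hbij, Finset.card_powersetCard, Finset.card_range]
  rfl

lemma card_Zset_rec {n : ℕ} (hn : 1 ≤ n) :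
    #(Zset n) = ∑ t ∈ Icc 1 n, fret t * #(Zset (n - t)) := by
  have h := T_rec 1 hn
  rw [T_one] at h
  have h2 : ∑ t ∈ Icc 1 n, (fret t : ℝ) * ((1 + 1 ^ t) / 2) * T 1 (n - t)
      = ∑ t ∈ Icc 1 n, ((fret t * #(Zset (n - t)) : ℕ) : ℝ) := by
    apply Finset.sum_congr rfl
    intro t _
    rw [T_one]
    push_cast
    norm_num
  rw [h2] at h
  exact_mod_cast h

lemma sum_even_icc {M : Type*} [AddCommMonoid M] (g : ℕ → M) (k : ℕ)
    (hodd : ∀ t, ¬ Even t → g t = 0) :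
    ∑ t ∈ Icc 1 (2 * k), g t = ∑ j ∈ Icc 1 k, g (2 * j) := by
  rw [← Finset.sum_filter_add_sum_filter_not (Icc 1 (2*k)) (fun t => Even t)]
  rw [Finset.sum_eq_zero (fun t ht => hodd t (Finset.mem_filter.1 ht).2), add_zero]
  apply Finset.sum_nbij' (i := fun t => t / 2) (j := fun j => 2 * j)
  · intro t ht
    simp only [Finset.mem_filter, Finset.mem_Icc] at ht
    obtain ⟨⟨h1, h2⟩, h3⟩ := ht
    rw [Nat.even_iff] at h3
    simp only [Finset.mem_Icc]
    omega
  · intro j hj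
    simp only [Finset.mem_Icc] at hj
    simp only [Finset.mem_filter, Finset.mem_Icc]
    exact ⟨⟨by omega, by omega⟩, even_two_mul j⟩
  · intro t ht
    simp only [Finset.mem_filter, Finset.mem_Icc] at ht
    have h3 := ht.2
    rw [Nat.even_iff] at h3
    omega
  · intro j _
    omega
  · intro t ht
    simp only [Finset.mem_filter, Finset.mem_Icc] at ht
    have h3 := ht.2
    rw [Nat.even_iff] at h3
    congr 1
    omega

lemma fret_even : ∀ k, 1 ≤ k → fret (2 * k) = 2 * catalan (k - 1) := by
  intro k
  induction k using Nat.strong_induction_on with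
  | _ k IH =>
  intro hk
  have hrec := card_Zset_rec (n := 2*k) (by omega)
  have heven : ∀ t, ¬ Even t → fret t * #(Zset (2*k - t)) = 0 := by
    intro t ht
    rw [fret_odd ht, zero_mul]
  rw [sum_even_icc _ k heven, card_Zset] at hrec
  have hZ : ∀ j ∈ Icc 1 k, fret (2*j) * #(Zset (2*k - 2*j))
      = fret (2*j) * Nat.centralBinom (k - j) := by
    intro j _
    rw [show 2*k - 2*j = 2*(k - j) by omega, card_Zset]
  rw [Finset.sum_congr rfl hZ] at hrec
  have hsplit : ∀ g : ℕ → ℕ, ∑ j ∈ Icc 1 k, g j = ∑ j ∈ Icc 1 (k-1), g j + g k := by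
    intro g
    have h2 := Finset.sum_Icc_succ_top (a := 1) (b := k - 1) (by omega) g
    rw [show k - 1 + 1 = k by omega] at h2
    exact h2
  rw [hsplit] at hrec
  have hconv := two_cat_conv k hk
  rw [hsplit] at hconv
  have hIH : ∑ j ∈ Icc 1 (k-1), fret (2*j) * Nat.centralBinom (k - j)
      = ∑ j ∈ Icc 1 (k-1), 2 * catalan (j-1) * Nat.centralBinom (k - j) := by
    apply Finset.sum_congr rfl
    intro j hj
    simp only [Finset.mem_Icc] at hj
    rw [IH j (by omega) (by omega)]
  rw [hIH] at hrec
  simp only [Nat.sub_self, Nat.centralBinom_zero, mul_one] at hrec hconv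
  omega

lemma T_main (s : ℝ) (m : ℕ) :
    T s (2 * m) = (catalan m : ℝ) * ∑ j ∈ range (m + 1), (s ^ 2) ^ j := by
  induction m using Nat.strong_induction_on with
  | _ m IH =>
  rcases Nat.eq_zero_or_pos m with rfl | hm
  · have hz : Zset 0 = {(fun _ => (0:ℤ))} := by
      ext ε
      constructor
      · intro h
        rw [mem_Zset, mem_stepSet] at h
        simp only [Finset.mem_singleton]
        funext i
        exact h.1.2 i (Nat.zero_le i)
      · intro h
        simp only [Finset.mem_singleton] at h
        subst h
        rw [mem_Zset, mem_stepSet]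
        exact ⟨⟨fun i hi => absurd hi (Nat.not_lt_zero i), fun i _ => rfl⟩, by simp [ps]⟩
    rw [mul_zero, T, hz, Finset.sum_singleton, wt]
    rw [show Finset.Icc 1 0 = ∅ from Finset.Icc_eq_empty (by omega)]
    simp [catalan_zero]
  · rw [T_rec s (show 1 ≤ 2*m by omega)]
    have heven : ∀ t, ¬ Even t → (fret t : ℝ) * ((1 + s^t)/2) * T s (2*m - t) = 0 := by
      intro t ht
      rw [fret_odd ht]
      push_cast
      ring
    rw [sum_even_icc _ m heven]
    have hterm : ∀ j ∈ Icc 1 m, (fret (2*j) : ℝ) * ((1 + s^(2*j))/2) * T s (2*m - 2*j)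
        = (catalan (j-1) : ℝ) * (catalan (m - j) : ℝ) * (1 + (s^2)^j)
            * (∑ i ∈ range (m - j + 1), (s^2)^i) := by
      intro j hj
      simp only [Finset.mem_Icc] at hj
      rw [fret_even j hj.1, show 2*m - 2*j = 2*(m-j) by omega, IH (m - j) (by omega),
        pow_mul]
      push_cast
      ring
    rw [Finset.sum_congr rfl hterm, key_real (s^2) m hm]

def trunc (N : ℕ) (g : ℕ → ℤ) : ℕ → ℤ := fun i => if i < N then g i else 0

lemma excursionProd_eq_wt {N : ℕ} {q : ℝ} (σ ε : ℕ → ℤ)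
    (hσ : ∀ n, n ≤ N → σ n = ps ε n) :
    excursionProd σ q N = wt (Real.exp (-(q / N))) N ε := by
  rw [excursionProd, wt]
  have hset : (Finset.Icc 1 N).filter (fun n => σ n = 0)
      = (Finset.Icc 1 N).filter (fun n => ps ε n = 0) := by
    apply Finset.filter_congr
    intro n hn
    rw [hσ n (Finset.mem_Icc.1 hn).2]
  rw [hset]
  apply Finset.prod_congr rfl
  intro n hn
  simp only [Finset.mem_filter, Finset.mem_Icc] at hn
  have hprev : prevZero σ n = prevZero (ps ε) n := by
    rw [prevZero, prevZero]
    congr 1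
    apply Finset.filter_congr
    intro m hm
    rw [hσ m (by have := Finset.mem_range.1 hm; omega)]
  rw [hprev]
  have hple : prevZero (ps ε) n ≤ n := prevZero_le _ _
  rw [show ((n : ℝ) - (prevZero (ps ε) n : ℝ))
      = ((n - prevZero (ps ε) n : ℕ) : ℝ) by rw [Nat.cast_sub hple],
    mul_comm, Real.exp_nat_mul]

lemma intGL {Ω : Type*} [MeasurableSpace Ω] (P : Measure Ω) [IsProbabilityMeasure P]
    (X : ℕ → Ω → ℤ) (hXmeas : ∀ i, Measurable (X i))
    (hXind : iIndepFun X P)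
    (hXup : ∀ i, P {ω | X i ω = 1} = 1 / 2)
    (hXdown : ∀ i, P {ω | X i ω = -1} = 1 / 2)
    (N : ℕ) (G : (ℕ → ℤ) → ℝ) :
    ∫ ω in {ω | ps (fun i => X i ω) N = 0}, G (trunc N (fun i => X i ω)) ∂P
      = ((1:ℝ)/2)^N * ∑ ε ∈ Zset N, G ε := by
  classical
  set A : (ℕ → ℤ) → Set Ω := fun ε => ⋂ i ∈ range N, X i ⁻¹' {ε i} with hA
  have hAmeas : ∀ ε, MeasurableSet (A ε) := fun ε =>
    Finset.measurableSet_biInter _ (fun i _ => (hXmeas i) (measurableSet_singleton (ε i)))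
  have hmarg : ∀ i (z : ℤ), z = 1 ∨ z = -1 → P (X i ⁻¹' {z}) = 1/2 := by
    intro i z hz
    have h1 : X i ⁻¹' {z} = {ω | X i ω = z} := by ext ω; simp
    rcases hz with rfl | rfl
    · rw [h1]; exact hXup i
    · rw [h1]; exact hXdown i
  have hPA : ∀ ε ∈ stepSet N, P (A ε) = ((1:ENNReal)/2)^N := by
    intro ε hε
    rw [mem_stepSet] at hε
    rw [hA]
    rw [hXind.measure_inter_preimage_eq_mul (range N) (sets := fun i => {ε i})
      (fun i _ => measurableSet_singleton (ε i))]
    rw [Finset.prod_congr rfl (fun i hi => hmarg i (ε i) (hε.1 i (Finset.mem_range.1 hi)))]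
    rw [Finset.prod_const, Finset.card_range]
  set Bad : Set Ω := ⋃ i ∈ range N, {ω | ¬ (X i ω = 1 ∨ X i ω = -1)} with hBad
  have hBadnull : P Bad = 0 := by
    rw [hBad]
    refine le_antisymm (le_trans (measure_biUnion_finset_le _ _)
      (le_of_eq (Finset.sum_eq_zero ?_))) zero_le
    intro i _
    have h1 : {ω | X i ω = 1} ∪ {ω | X i ω = -1} = {ω | X i ω = 1 ∨ X i ω = -1} := by
      ext ω; simp [Set.mem_union]
    have hd : Disjoint {ω | X i ω = 1} {ω | X i ω = -1} := by
      rw [Set.disjoint_left]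
      intro ω h1 h2
      simp only [Set.mem_setOf_eq] at h1 h2
      rw [h1] at h2
      norm_num at h2
    have hmeas1 : MeasurableSet {ω | X i ω = -1} := (hXmeas i) (measurableSet_singleton _)
    have h2 : P {ω | X i ω = 1 ∨ X i ω = -1} = 1 := by
      rw [← h1, measure_union hd hmeas1, hXup, hXdown, one_div,
        ENNReal.inv_two_add_inv_two]
    have h3 : MeasurableSet {ω | X i ω = 1 ∨ X i ω = -1} := by
      rw [← h1]
      exact ((hXmeas i) (measurableSet_singleton _)).union hmeas1
    have h4 := (prob_compl_eq_zero_iff h3).2 h2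
    have h5 : {ω | ¬ (X i ω = 1 ∨ X i ω = -1)} = {ω | X i ω = 1 ∨ X i ω = -1}ᶜ := by
      ext ω; simp
    rw [h5, h4]
  have hmeasS : MeasurableSet {ω | ps (fun i => X i ω) N = 0} := by
    have hm : Measurable (fun ω => ps (fun i => X i ω) N) := by
      simp only [ps]
      exact Finset.measurable_sum _ (fun i _ => hXmeas i)
    exact hm (measurableSet_singleton 0)
  have hpt : ∀ ω ∉ Bad,
      Set.indicator {ω | ps (fun i => X i ω) N = 0}
          (fun ω => G (trunc N (fun i => X i ω))) ω
        = ∑ ε ∈ Zset N, Set.indicator (A ε) (fun _ => G ε) ω := by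
    intro ω hω
    have hgood : ∀ i < N, X i ω = 1 ∨ X i ω = -1 := by
      intro i hi
      by_contra h
      exact hω (Set.mem_biUnion (Finset.mem_range.2 hi) h)
    set ε₀ : ℕ → ℤ := trunc N (fun i => X i ω) with hε₀def
    have hε₀ : ε₀ ∈ stepSet N := by
      rw [mem_stepSet]
      constructor
      · intro i hi
        simpa [hε₀def, trunc, hi] using hgood i hi
      · intro i hi
        simp [hε₀def, trunc, Nat.not_lt.2 hi]
    have hmemA : ∀ ε ∈ stepSet N, (ω ∈ A ε ↔ ε = ε₀) := by
      intro ε hε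
      rw [hA]
      simp only [Set.mem_iInter, Set.mem_preimage, Set.mem_singleton_iff]
      constructor
      · intro h
        funext i
        by_cases hi : i < N
        · rw [hε₀def]
          simp only [trunc, if_pos hi]
          exact (h i (Finset.mem_range.2 hi)).symm
        · rw [(mem_stepSet.1 hε).2 i (by omega), hε₀def]
          simp [trunc, hi]
      · rintro rfl i hi
        rw [hε₀def]
        simp [trunc, Finset.mem_range.1 hi]
    have hps0 : ps ε₀ N = ps (fun i => X i ω) N := by
      apply Finset.sum_congr rfl
      intro i hi
      simp [hε₀def, trunc, Finset.mem_range.1 hi]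
    by_cases hz : ps (fun i => X i ω) N = 0
    · rw [Set.indicator_of_mem (show ω ∈ {ω | ps (fun i => X i ω) N = 0} from hz)]
      have hZ : ε₀ ∈ Zset N := mem_Zset.2 ⟨hε₀, by rw [hps0]; exact hz⟩
      rw [Finset.sum_eq_single_of_mem ε₀ hZ]
      · rw [Set.indicator_of_mem ((hmemA ε₀ hε₀).2 rfl)]
      · intro ε hε hne
        rw [Set.indicator_of_notMem]
        intro hmem
        exact hne ((hmemA ε (mem_Zset.1 hε).1).1 hmem)
    · rw [Set.indicator_of_notMem (show ω ∉ {ω | ps (fun i => X i ω) N = 0} from hz)]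
      symm
      apply Finset.sum_eq_zero
      intro ε hε
      rw [Set.indicator_of_notMem]
      intro hmem
      have h6 := (hmemA ε (mem_Zset.1 hε).1).1 hmem
      subst h6
      exact hz (by rw [← hps0]; exact (mem_Zset.1 hε).2)
  calc ∫ ω in {ω | ps (fun i => X i ω) N = 0}, G (trunc N (fun i => X i ω)) ∂P
      = ∫ ω, Set.indicator {ω | ps (fun i => X i ω) N = 0}
          (fun ω => G (trunc N (fun i => X i ω))) ω ∂P := (integral_indicator hmeasS).symm
    _ = ∫ ω, ∑ ε ∈ Zset N, Set.indicator (A ε) (fun _ => G ε) ω ∂P := by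
        apply integral_congr_ae
        filter_upwards [compl_mem_ae_iff.2 hBadnull] with ω hω
        exact hpt ω hω
    _ = ∑ ε ∈ Zset N, ∫ ω, Set.indicator (A ε) (fun _ => G ε) ω ∂P := by
        apply integral_finset_sum
        intro ε _
        exact (integrable_const (G ε)).indicator (hAmeas ε)
    _ = ∑ ε ∈ Zset N, ((1:ℝ)/2)^N * G ε := by
        apply Finset.sum_congr rfl
        intro ε hε
        rw [integral_indicator_const (G ε) (hAmeas ε), measureReal_def, hPA ε (mem_Zset.1 hε).1]
        rw [smul_eq_mul]
        congr 1
        rw [ENNReal.toReal_pow]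
        norm_num
    _ = ((1:ℝ)/2)^N * ∑ ε ∈ Zset N, G ε := by rw [Finset.mul_sum]

lemma ratio_eq {Ω : Type*} [MeasurableSpace Ω] (P : Measure Ω) [IsProbabilityMeasure P]
    (X : ℕ → Ω → ℤ) (hXmeas : ∀ i, Measurable (X i))
    (hXind : iIndepFun X P)
    (hXup : ∀ i, P {ω | X i ω = 1} = 1 / 2)
    (hXdown : ∀ i, P {ω | X i ω = -1} = 1 / 2)
    (S : ℕ → Ω → ℤ) (hS : ∀ n ω, S n ω = ∑ i ∈ Finset.range n, X i ω)
    (q : ℝ) (hq : 0 < q) (m : ℕ) (hm : 1 ≤ m) :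
    (∫ ω in {ω | S (2 * m) ω = 0}, excursionProd (fun n => S n ω) q (2 * m) ∂P) /
        (P {ω | S (2 * m) ω = 0}).toReal
      = (∑ j ∈ range (m + 1), Real.exp (-(q / m)) ^ j) / (m + 1) := by
  set N := 2 * m with hN
  set s := Real.exp (-(q / N)) with hs
  have hmne : (m : ℝ) ≠ 0 := Nat.cast_ne_zero.2 (by omega)
  have hsetEq : {ω | S N ω = 0} = {ω | ps (fun i => X i ω) N = 0} := by
    ext ω
    simp only [Set.mem_setOf_eq, hS, ps]
  have hnum : ∫ ω in {ω | S N ω = 0}, excursionProd (fun n => S n ω) q N ∂P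
      = ((1:ℝ)/2)^N * T s N := by
    rw [hsetEq]
    have hfun : ∀ ω, excursionProd (fun n => S n ω) q N
        = wt s N (trunc N (fun i => X i ω)) := by
      intro ω
      apply excursionProd_eq_wt
      intro n hn
      rw [hS]
      apply Finset.sum_congr rfl
      intro i hi
      simp [trunc, show i < N by have := Finset.mem_range.1 hi; omega]
    calc ∫ ω in {ω | ps (fun i => X i ω) N = 0}, excursionProd (fun n => S n ω) q N ∂P
        = ∫ ω in {ω | ps (fun i => X i ω) N = 0},
            wt s N (trunc N (fun i => X i ω)) ∂P :=
          integral_congr_ae (Filter.Eventually.of_forall (fun ω => hfun ω))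
      _ = ((1:ℝ)/2)^N * ∑ ε ∈ Zset N, wt s N ε :=
          intGL P X hXmeas hXind hXup hXdown N (wt s N)
      _ = ((1:ℝ)/2)^N * T s N := rfl
  have hden : (P {ω | S N ω = 0}).toReal = ((1:ℝ)/2)^N * (#(Zset N) : ℝ) := by
    have h1 : (P {ω | S N ω = 0}).toReal
        = ∫ ω in {ω | ps (fun i => X i ω) N = 0}, (1:ℝ) ∂P := by
      rw [← hsetEq, setIntegral_const, smul_eq_mul, mul_one, measureReal_def]
    rw [h1]
    have h2 := intGL P X hXmeas hXind hXup hXdown N (fun _ => (1:ℝ))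
    rw [h2]
    simp
  rw [hnum, hden]
  have hs2 : s ^ 2 = Real.exp (-(q / m)) := by
    rw [hs, show (2:ℕ) = ((2:ℕ):ℕ) from rfl, ← Real.exp_nat_mul]
    congr 1
    rw [hN]
    push_cast
    field_simp
  have hT := T_main s m
  rw [show T s N = T s (2 * m) from rfl, hT, hs2,
    show #(Zset N) = Nat.centralBinom m from card_Zset m]
  have hcb : ((Nat.centralBinom m : ℕ) : ℝ) = ((m:ℝ) + 1) * (catalan m : ℝ) := by
    rw [← succ_mul_catalan_eq_centralBinom]
    push_cast
    ring
  rw [hcb]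
  have hhalf : ((1:ℝ)/2)^N ≠ 0 := by positivity
  have hcat : (catalan m : ℝ) ≠ 0 := by
    have h1 : 0 < Nat.centralBinom m := Nat.centralBinom_pos m
    have h2 := succ_mul_catalan_eq_centralBinom m
    have h3 : catalan m ≠ 0 := by
      intro hcon
      rw [hcon] at h2
      omega
    exact_mod_cast h3
  rw [mul_div_mul_left _ _ hhalf, show ((m:ℝ) + 1) * (catalan m : ℝ)
    = (catalan m : ℝ) * ((m:ℝ) + 1) from mul_comm _ _,
    mul_div_mul_left _ _ hcat]

lemma limit_aux (q : ℝ) (hq : 0 < q) :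
    Tendsto (fun m : ℕ => (∑ j ∈ range (m + 1), Real.exp (-(q / m)) ^ j) / (m + 1))
      atTop (nhds ((1 - Real.exp (-q)) / q)) := by
  have hqm : Tendsto (fun m : ℕ => q / m) atTop (nhds 0) := by
    have h1 := tendsto_one_div_atTop_nhds_zero_nat.const_mul q
    simpa [mul_one_div, div_eq_mul_inv] using h1
  have ha : Tendsto (fun m : ℕ => -(q + q / m)) atTop (nhds (-q)) := by
    have h2 : Tendsto (fun m : ℕ => q + q / m) atTop (nhds (q + 0)) :=
      tendsto_const_nhds.add hqm
    rw [add_zero] at h2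
    exact h2.neg
  have hnum : Tendsto (fun m : ℕ => Real.exp (-(q + q / m)) - 1) atTop
      (nhds (Real.exp (-q) - 1)) :=
    ((Real.continuous_exp.tendsto _).comp ha).sub tendsto_const_nhds
  have hslope : Tendsto (fun y : ℝ => (Real.exp y - 1) / y)
      (nhdsWithin 0 {0}ᶜ) (nhds 1) := by
    have h := Real.hasDerivAt_exp 0
    rw [hasDerivAt_iff_tendsto_slope] at h
    rw [Real.exp_zero] at h
    refine h.congr' ?_
    filter_upwards [self_mem_nhdsWithin] with y hy
    rw [slope_def_field]
    simp [Real.exp_zero]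
  have hy : Tendsto (fun m : ℕ => -(q / m)) atTop (nhdsWithin 0 {0}ᶜ) := by
    rw [tendsto_nhdsWithin_iff]
    constructor
    · simpa using hqm.neg
    · filter_upwards [Filter.eventually_ge_atTop 1] with m hm
      have hpos : (0:ℝ) < q / m := div_pos hq (by exact_mod_cast hm)
      simp only [Set.mem_compl_iff, Set.mem_singleton_iff]
      intro hcon
      rw [neg_eq_zero] at hcon
      linarith
  have hratm : Tendsto (fun m : ℕ =>
      (Real.exp (-(q / m)) - 1) / (-(q / m))) atTop (nhds 1) := hslope.comp hy
  have hden : Tendsto (fun m : ℕ =>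
      (Real.exp (-(q / m)) - 1) * ((m:ℝ) + 1)) atTop (nhds (-q)) := by
    have hprod := hratm.mul ha
    rw [one_mul] at hprod
    apply hprod.congr'
    filter_upwards [Filter.eventually_ge_atTop 1] with m hm
    have hmne : (m : ℝ) ≠ 0 := Nat.cast_ne_zero.2 (by omega)
    have hqmne : q / (m:ℝ) ≠ 0 := div_ne_zero (ne_of_gt hq) hmne
    field_simp
  have hdiv := hnum.div hden (by simpa using ne_of_gt hq)
  have hfinal : (Real.exp (-q) - 1) / (-q) = (1 - Real.exp (-q)) / q := by
    rw [div_neg, ← neg_div]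
    ring_nf
  rw [hfinal] at hdiv
  apply hdiv.congr'
  filter_upwards [Filter.eventually_ge_atTop 1] with m hm
  have hmne : (m : ℝ) ≠ 0 := Nat.cast_ne_zero.2 (by omega)
  have hr1 : Real.exp (-(q / m)) ≠ 1 := by
    intro hcon
    have h0 : -(q / m) = 0 := (Real.exp_eq_one_iff _).1 hcon
    have hpos : (0:ℝ) < q / m := div_pos hq (by positivity)
    rw [neg_eq_zero] at h0
    linarith
  rw [geom_sum_eq hr1 (m + 1)]
  have hexp : Real.exp (-(q / m)) ^ (m + 1) = Real.exp (-(q + q / m)) := by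
    rw [← Real.exp_nat_mul]
    congr 1
    push_cast
    field_simp
  rw [hexp]
  have hne2 : (Real.exp (-(q / m)) - 1) * ((m:ℝ) + 1) ≠ 0 := by
    apply mul_ne_zero
    · intro hcon
      apply hr1
      linarith [sub_eq_zero.1 hcon]
    · positivity
  simp only [Pi.div_apply]
  field_simp

end SRW

/-- for the symmetric simple random walk on `ℤ` started at `0` and every
`q > 0`,
`lim_{N→∞, N even} E[∏_{j≥1: τ_j≤N} (1+e^{-(q/N)(τ_j-τ_{j-1})})/2 | S_N = 0]
  = (1-e^{-q})/q`,
where `τ` are the successive return times of `S` to `0`. -/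
theorem srw_excursion_limit
    {Ω : Type*} [MeasurableSpace Ω] (P : Measure Ω) [IsProbabilityMeasure P]
    (X : ℕ → Ω → ℤ) (hXmeas : ∀ i, Measurable (X i))
    (hXind : iIndepFun X P)
    (hXup : ∀ i, P {ω | X i ω = 1} = 1 / 2)
    (hXdown : ∀ i, P {ω | X i ω = -1} = 1 / 2)
    (S : ℕ → Ω → ℤ) (hS : ∀ n ω, S n ω = ∑ i ∈ Finset.range n, X i ω)
    (q : ℝ) (hq : 0 < q) :
    Tendsto (fun m : ℕ =>
        (∫ ω in {ω | S (2 * m) ω = 0}, excursionProd (fun n => S n ω) q (2 * m) ∂P) /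
          (P {ω | S (2 * m) ω = 0}).toReal)
      atTop (nhds ((1 - Real.exp (-q)) / q)) := by
  apply (SRW.limit_aux q hq).congr'
  filter_upwards [Filter.eventually_ge_atTop 1] with m hm
  exact (SRW.ratio_eq P X hXmeas hXind hXup hXdown S hS q hq m hm).symm
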